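/- Let A be a complex unital Banach algebra and let a ∈ A have a Moore-Penrose inverse a†. Then the following statements are equivalent: (i) a is EP; (ii) there exists s ∈ A with s⁻¹(0) = 0 and a† = sa; (iii) there exist s₁, s₂ ∈ A with a† = s₁a and a = s₂a†; (iv) there exists u ∈ A with uA = A and a† = au; (v) there exist u₁, u₂ ∈ A with a† = au₁ and a = a†u₂; (vi) there exists t ∈ A with t₋₁(0) = 0 and a† = at; (vii) there exists x ∈ A with Ax = A and a† = xa. -/

import Mathlib

noncomputable section

/-- An element `h` of a complex normed algebra is *hermitian* if `‖exp (i t h)‖ = 1`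
for all real `t`. -/
def IsHermitianElem {A : Type*} [NormedRing A] [NormedAlgebra ℂ A] (h : A) : Prop :=
  ∀ t : ℝ, ‖NormedSpace.exp ((Complex.I * (t : ℂ)) • h)‖ = 1

/-- `x` is a Moore–Penrose inverse of `a`: `axa = a`, `xax = x`, and `ax`, `xa` are hermitian. -/
def IsMPInv {A : Type*} [NormedRing A] [NormedAlgebra ℂ A] (a x : A) : Prop :=
  a * x * a = a ∧ x * a * x = x ∧ IsHermitianElem (a * x) ∧ IsHermitianElem (x * a)

section Aux

variable {A : Type*} [NormedRing A] [NormedAlgebra ℂ A] [CompleteSpace A]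

lemma exp_smul_idem (z : ℂ) {p : A} (hpp : p * p = p) :
    NormedSpace.exp (z • p) = 1 + (Complex.exp z - 1) • p := by
  have hpow : ∀ n : ℕ, p ^ (n + 1) = p := by
    intro n
    induction n with
    | zero => simp
    | succ n ih => rw [pow_succ, ih, hpp]
  have hsum : Summable (fun n : ℕ => (n.factorial⁻¹ : ℂ) • (z • p) ^ n) :=
    NormedSpace.expSeries_summable' (𝕂 := ℂ) (z • p)
  have hsumC : Summable (fun n : ℕ => (n.factorial⁻¹ : ℂ) * z ^ n) := by
    simpa [smul_eq_mul] using NormedSpace.expSeries_summable' (𝕂 := ℂ) z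
  have hexpC : (∑' n : ℕ, (n.factorial⁻¹ : ℂ) * z ^ n) = Complex.exp z := by
    rw [Complex.exp_eq_exp_ℂ, NormedSpace.exp_eq_tsum ℂ]
    simp [smul_eq_mul]
  simp only [NormedSpace.exp_eq_tsum ℂ]
  rw [Summable.tsum_eq_zero_add hsum]
  have h0 : ((0 : ℕ).factorial⁻¹ : ℂ) • (z • p) ^ 0 = 1 := by simp
  rw [h0]
  congr 1
  have hterm : ∀ n : ℕ, ((n + 1 : ℕ).factorial⁻¹ : ℂ) • (z • p) ^ (n + 1)
      = (((n + 1 : ℕ).factorial⁻¹ : ℂ) * z ^ (n + 1)) • p := by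
    intro n
    rw [smul_pow, hpow, smul_smul]
  calc (∑' n : ℕ, ((n + 1 : ℕ).factorial⁻¹ : ℂ) • (z • p) ^ (n + 1))
      = ∑' n : ℕ, (((n + 1 : ℕ).factorial⁻¹ : ℂ) * z ^ (n + 1)) • p := by
        exact tsum_congr hterm
    _ = (∑' n : ℕ, ((n + 1 : ℕ).factorial⁻¹ : ℂ) * z ^ (n + 1)) • p := by
        refine Summable.tsum_smul_const ?_ p
        exact (summable_nat_add_iff (f := fun m : ℕ => ((m.factorial : ℂ))⁻¹ * z ^ m) 1).mpr hsumC
    _ = (Complex.exp z - 1) • p := by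
        congr 1
        have := Summable.tsum_eq_zero_add hsumC
        rw [hexpC] at this
        simp only [Nat.factorial_zero, pow_zero, Nat.cast_one, inv_one, mul_one] at this
        rw [this]; ring

lemma norm_one_sub_two_smul {p : A} (hp : IsHermitianElem p) (hpp : p * p = p) :
    ‖1 - (2 : ℂ) • p‖ = 1 := by
  have h := hp Real.pi
  rw [exp_smul_idem (Complex.I * (Real.pi : ℂ)) hpp] at h
  rw [mul_comm Complex.I, Complex.exp_pi_mul_I] at h
  have : (1 : A) + ((-1 : ℂ) - 1) • p = 1 - (2 : ℂ) • p := by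
    rw [show ((-1 : ℂ) - 1) = -2 by ring, neg_smul, ← sub_eq_add_neg]
  rwa [this] at h

lemma sq_zero_of_norm_le {n : A} {c : ℂ} (hc : c ≠ 0) {w : A} (hw : w = 1 + c • n)
    (hn : n * n = 0) (hwn : ‖w‖ ≤ 1) : n = 0 := by
  have hpk : ∀ k : ℕ, w ^ k = 1 + ((k : ℂ) * c) • n := by
    intro k
    induction k with
    | zero => simp
    | succ k ih =>
      rw [pow_succ, ih, hw]
      have hz : (((k : ℂ) * c) • n) * (c • n) = 0 := by
        rw [smul_mul_assoc, mul_smul_comm, smul_smul, hn, smul_zero]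
      rw [add_mul, mul_add, mul_add, one_mul, mul_one, hz, add_zero]
      have hcast : (((k + 1 : ℕ)) : ℂ) * c = (k : ℂ) * c + c := by push_cast; ring
      rw [hcast, add_smul]
      simp only [one_mul]
      abel
  have hbound : ∀ k : ℕ, ((k : ℝ) + 1) * (‖c‖ * ‖n‖) ≤ 1 + ‖(1 : A)‖ := by
    intro k
    have h1 : ‖(((k + 1 : ℕ) : ℂ) * c) • n‖ = ((k : ℝ) + 1) * (‖c‖ * ‖n‖) := by
      rw [norm_smul, norm_mul, Complex.norm_natCast, mul_assoc]
      push_cast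
      ring
    have h2 : (((k + 1 : ℕ) : ℂ) * c) • n = w ^ (k + 1) - 1 := by rw [hpk (k + 1)]; abel
    have h3 : ‖w ^ (k + 1) - 1‖ ≤ ‖w ^ (k + 1)‖ + ‖(1 : A)‖ := norm_sub_le _ _
    have h4 : ‖w ^ (k + 1)‖ ≤ 1 := by
      calc ‖w ^ (k + 1)‖ ≤ ‖w‖ ^ (k + 1) := norm_pow_le' w (Nat.succ_pos k)
        _ ≤ 1 := pow_le_one₀ (norm_nonneg _) hwn
    rw [← h1, h2]
    linarith
  by_contra hne
  have hpos : 0 < ‖c‖ * ‖n‖ :=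
    mul_pos (norm_pos_iff.mpr hc) (norm_pos_iff.mpr hne)
  obtain ⟨k, hk⟩ := exists_nat_gt ((1 + ‖(1 : A)‖) / (‖c‖ * ‖n‖))
  have hb := hbound k
  rw [div_lt_iff₀ hpos] at hk
  have : (k : ℝ) * (‖c‖ * ‖n‖) ≤ ((k : ℝ) + 1) * (‖c‖ * ‖n‖) := by nlinarith
  linarith

lemma herm_idem_eq {p q : A} (hp : IsHermitianElem p) (hq : IsHermitianElem q)
    (hpp : p * p = p) (hqq : q * q = q) (h1 : p * q = p) (h2 : q * p = q) : p = q := by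
  have hn : (p - q) * (p - q) = 0 := by
    rw [sub_mul, mul_sub, mul_sub, hpp, hqq, h1, h2]
    abel
  have hw : (1 - (2 : ℂ) • p) * (1 - (2 : ℂ) • q) = 1 + (2 : ℂ) • (p - q) := by
    have hsq : ((2 : ℂ) • p) * ((2 : ℂ) • q) = (4 : ℂ) • p := by
      rw [smul_mul_assoc, mul_smul_comm, smul_smul, h1]
      norm_num
    rw [sub_mul, mul_sub, mul_sub, one_mul, mul_one, hsq, smul_sub]
    simp only [one_mul]
    module
  have hwle : ‖(1 - (2 : ℂ) • p) * (1 - (2 : ℂ) • q)‖ ≤ 1 := by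
    calc ‖(1 - (2 : ℂ) • p) * (1 - (2 : ℂ) • q)‖
        ≤ ‖1 - (2 : ℂ) • p‖ * ‖1 - (2 : ℂ) • q‖ := norm_mul_le _ _
      _ = 1 := by rw [norm_one_sub_two_smul hp hpp, norm_one_sub_two_smul hq hqq, one_mul]
  have h0 : p - q = 0 := sq_zero_of_norm_le (by norm_num : (2 : ℂ) ≠ 0) hw hn hwle
  exact sub_eq_zero.mp h0

lemma herm_idem_eq' {p q : A} (hp : IsHermitianElem p) (hq : IsHermitianElem q)
    (hpp : p * p = p) (hqq : q * q = q) (h1 : p * q = q) (h2 : q * p = p) : p = q := by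
  have hn : (p - q) * (p - q) = 0 := by
    rw [sub_mul, mul_sub, mul_sub, hpp, hqq, h1, h2]
    abel
  have hw : (1 - (2 : ℂ) • p) * (1 - (2 : ℂ) • q) = 1 + (-2 : ℂ) • (p - q) := by
    have hsq : ((2 : ℂ) • p) * ((2 : ℂ) • q) = (4 : ℂ) • q := by
      rw [smul_mul_assoc, mul_smul_comm, smul_smul, h1]
      norm_num
    rw [sub_mul, mul_sub, mul_sub, one_mul, mul_one, hsq, smul_sub]
    simp only [one_mul]
    module
  have hwle : ‖(1 - (2 : ℂ) • p) * (1 - (2 : ℂ) • q)‖ ≤ 1 := by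
    calc ‖(1 - (2 : ℂ) • p) * (1 - (2 : ℂ) • q)‖
        ≤ ‖1 - (2 : ℂ) • p‖ * ‖1 - (2 : ℂ) • q‖ := norm_mul_le _ _
      _ = 1 := by rw [norm_one_sub_two_smul hp hpp, norm_one_sub_two_smul hq hqq, one_mul]
  have h0 : p - q = 0 := sq_zero_of_norm_le (by norm_num : (-2 : ℂ) ≠ 0) hw hn hwle
  exact sub_eq_zero.mp h0


lemma ep_g {A : Type*} [Ring A] (a ad : A)
    (h1 : a * ad * a = a) (h2 : ad * a * ad = ad) (hc : a * ad = ad * a) :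
    (ad * ad + 1 - ad * a) * (a * a + 1 - ad * a) = 1 ∧
    (a * a + 1 - ad * a) * (ad * ad + 1 - ad * a) = 1 ∧
    (ad * ad + 1 - ad * a) * a = ad ∧
    a * (ad * ad + 1 - ad * a) = ad := by
  have f4 : a * a * ad = a := by
    rw [mul_assoc, hc, ← mul_assoc, h1]
  have f5 : ad * a * a = a := by
    rw [← hc, h1]
  have f6 : ad * ad * a = ad := by
    rw [mul_assoc, ← hc, ← mul_assoc, h2]
  have f7 : a * ad * ad = ad := by
    rw [hc, h2]
  have M1 : ad * ad * (a * a) = ad * a := by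
    rw [show ad * ad * (a * a) = ad * (ad * a * a) by noncomm_ring, f5]
  have M2 : ad * ad * (ad * a) = ad * ad := by
    rw [show ad * ad * (ad * a) = ad * (ad * ad * a) by noncomm_ring, f6]
  have M3 : ad * a * (a * a) = a * a := by
    rw [show ad * a * (a * a) = ad * a * a * a by noncomm_ring, f5]
  have M4 : ad * a * (ad * a) = ad * a := by
    rw [show ad * a * (ad * a) = ad * a * ad * a by noncomm_ring, h2]
  have M5 : a * a * (ad * ad) = ad * a := by
    rw [show a * a * (ad * ad) = a * a * ad * ad by noncomm_ring, f4, hc]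
  have M6 : a * a * (ad * a) = a * a := by
    rw [show a * a * (ad * a) = a * a * ad * a by noncomm_ring, f4]
  have M7 : ad * a * (ad * ad) = ad * ad := by
    rw [show ad * a * (ad * ad) = ad * a * ad * ad by noncomm_ring, h2]
  refine ⟨?_, ?_, ?_, ?_⟩
  · simp only [sub_mul, add_mul, mul_sub, mul_add, mul_one, one_mul, M1, M2, M3, M4]
    abel
  · simp only [sub_mul, add_mul, mul_sub, mul_add, mul_one, one_mul, M5, M6, M7, M4]
    abel
  · simp only [sub_mul, add_mul, one_mul, f6, f5]
    abel
  · simp only [mul_sub, mul_add, mul_one, ← mul_assoc, f7, h1]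
    abel

theorem ep_tfae_dagger_eq_sa' (a ad : A)
    (h1 : a * ad * a = a) (h2 : ad * a * ad = ad)
    (hhp : IsHermitianElem (a * ad)) (hhq : IsHermitianElem (ad * a)) :
    List.TFAE
      [a * ad = ad * a,
       ∃ s : A, {x : A | s * x = 0} = {0} ∧ ad = s * a,
       ∃ s₁ s₂ : A, ad = s₁ * a ∧ a = s₂ * ad,
       ∃ u : A, {y : A | ∃ x, y = u * x} = Set.univ ∧ ad = a * u,
       ∃ u₁ u₂ : A, ad = a * u₁ ∧ a = ad * u₂,
       ∃ t : A, {x : A | x * t = 0} = {0} ∧ ad = a * t,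
       ∃ x : A, {y : A | ∃ z, y = z * x} = Set.univ ∧ ad = x * a] := by
  have hpp : (a * ad) * (a * ad) = a * ad := by
    rw [show (a * ad) * (a * ad) = (a * ad * a) * ad by noncomm_ring, h1]
  have hqq : (ad * a) * (ad * a) = ad * a := by
    rw [show (ad * a) * (ad * a) = (ad * a * ad) * a by noncomm_ring, h2]
  tfae_have 1 → 2 := by
    intro hc
    obtain ⟨I1, I2, I3, _⟩ := ep_g a ad h1 h2 hc
    refine ⟨ad * ad + 1 - ad * a, ?_, I3.symm⟩
    ext x
    simp only [Set.mem_setOf_eq, Set.mem_singleton_iff]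
    constructor
    · intro hx
      have : (a * a + 1 - ad * a) * ((ad * ad + 1 - ad * a) * x) = 0 := by rw [hx, mul_zero]
      rwa [← mul_assoc, I2, one_mul] at this
    · rintro rfl; rw [mul_zero]
  tfae_have 2 → 3 := by
    rintro ⟨s, hs, hsa⟩
    have key : s * (a * (a * ad) - a) = 0 := by
      rw [mul_sub, ← mul_assoc, ← hsa, show ad * (a * ad) = ad * a * ad by noncomm_ring, h2,
        sub_self]
    have : a * (a * ad) - a ∈ ({0} : Set A) := by rw [← hs]; exact key
    have h0 : a * (a * ad) = a := sub_eq_zero.mp this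
    exact ⟨s, a * a, hsa, by rw [mul_assoc]; exact h0.symm⟩
  tfae_have 3 → 1 := by
    rintro ⟨s₁, s₂, e1, e2⟩
    have d1 : ad * (ad * a) = ad := by
      have : a * (1 - ad * a) = 0 := by rw [mul_sub, mul_one, ← mul_assoc, h1, sub_self]
      have : ad * (1 - ad * a) = 0 := by
        calc ad * (1 - ad * a) = s₁ * (a * (1 - ad * a)) := by rw [← mul_assoc, ← e1]
          _ = 0 := by rw [this, mul_zero]
      rw [mul_sub, mul_one] at this
      exact (sub_eq_zero.mp this).symm
    have d2 : a * (a * ad) = a := by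
      have : ad * (1 - a * ad) = 0 := by rw [mul_sub, mul_one, ← mul_assoc, h2, sub_self]
      have : a * (1 - a * ad) = 0 := by
        calc a * (1 - a * ad) = s₂ * (ad * (1 - a * ad)) := by rw [← mul_assoc, ← e2]
          _ = 0 := by rw [this, mul_zero]
      rw [mul_sub, mul_one] at this
      exact (sub_eq_zero.mp this).symm
    have hpq : (a * ad) * (ad * a) = a * ad := by
      rw [show (a * ad) * (ad * a) = a * (ad * (ad * a)) by noncomm_ring, d1]
    have hqp : (ad * a) * (a * ad) = ad * a := by
      rw [show (ad * a) * (a * ad) = ad * (a * (a * ad)) by noncomm_ring, d2]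
    exact herm_idem_eq hhp hhq hpp hqq hpq hqp
  tfae_have 1 → 4 := by
    intro hc
    obtain ⟨I1, I2, _, I4⟩ := ep_g a ad h1 h2 hc
    refine ⟨ad * ad + 1 - ad * a, ?_, I4.symm⟩
    ext y
    simp only [Set.mem_setOf_eq, Set.mem_univ, iff_true]
    exact ⟨(a * a + 1 - ad * a) * y, by rw [← mul_assoc, I1, one_mul]⟩
  tfae_have 4 → 5 := by
    rintro ⟨u, hu, e⟩
    have h1u : (1 : A) ∈ {y : A | ∃ x, y = u * x} := by rw [hu]; trivial
    obtain ⟨x0, hx0⟩ := h1u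
    have hcancel : ∀ z : A, z * u = 0 → z = 0 := by
      intro z hz
      have : z * (u * x0) = 0 := by rw [← mul_assoc, hz, zero_mul]
      rwa [← hx0, mul_one] at this
    have key : (ad * (a * a) - a) * u = 0 := by
      rw [sub_mul, show ad * (a * a) * u = ad * a * (a * u) by noncomm_ring, ← e, h2, sub_self]
    have h0 : ad * (a * a) = a := sub_eq_zero.mp (hcancel _ key)
    exact ⟨u, a * a, e, h0.symm⟩
  tfae_have 5 → 1 := by
    rintro ⟨u₁, u₂, e1, e2⟩
    have d1 : (a * ad) * ad = ad := by
      have : (1 - a * ad) * a = 0 := by rw [sub_mul, one_mul, h1, sub_self]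
      have : (1 - a * ad) * ad = 0 := by
        calc (1 - a * ad) * ad = (1 - a * ad) * a * u₁ := by rw [mul_assoc, ← e1]
          _ = 0 := by rw [this, zero_mul]
      rw [sub_mul, one_mul] at this
      exact (sub_eq_zero.mp this).symm
    have d2 : (ad * a) * a = a := by
      have : (1 - ad * a) * ad = 0 := by rw [sub_mul, one_mul, h2, sub_self]
      have : (1 - ad * a) * a = 0 := by
        calc (1 - ad * a) * a = (1 - ad * a) * ad * u₂ := by rw [mul_assoc, ← e2]
          _ = 0 := by rw [this, zero_mul]
      rw [sub_mul, one_mul] at this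
      exact (sub_eq_zero.mp this).symm
    have hpq : (a * ad) * (ad * a) = ad * a := by
      rw [show (a * ad) * (ad * a) = ((a * ad) * ad) * a by noncomm_ring, d1]
    have hqp : (ad * a) * (a * ad) = a * ad := by
      rw [show (ad * a) * (a * ad) = ((ad * a) * a) * ad by noncomm_ring, d2]
    exact herm_idem_eq' hhp hhq hpp hqq hpq hqp
  tfae_have 1 → 6 := by
    intro hc
    obtain ⟨I1, I2, _, I4⟩ := ep_g a ad h1 h2 hc
    refine ⟨ad * ad + 1 - ad * a, ?_, I4.symm⟩
    ext x
    simp only [Set.mem_setOf_eq, Set.mem_singleton_iff]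
    constructor
    · intro hx
      have : x * ((ad * ad + 1 - ad * a) * (a * a + 1 - ad * a)) = 0 := by
        rw [← mul_assoc, hx, zero_mul]
      rwa [I1, mul_one] at this
    · rintro rfl; rw [zero_mul]
  tfae_have 6 → 5 := by
    rintro ⟨t, ht, e⟩
    have key : (ad * (a * a) - a) * t = 0 := by
      rw [sub_mul, show ad * (a * a) * t = ad * a * (a * t) by noncomm_ring, ← e, h2, sub_self]
    have : ad * (a * a) - a ∈ ({0} : Set A) := by rw [← ht]; exact key
    exact ⟨t, a * a, e, (sub_eq_zero.mp this).symm⟩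
  tfae_have 1 → 7 := by
    intro hc
    obtain ⟨I1, I2, I3, _⟩ := ep_g a ad h1 h2 hc
    refine ⟨ad * ad + 1 - ad * a, ?_, I3.symm⟩
    ext y
    simp only [Set.mem_setOf_eq, Set.mem_univ, iff_true]
    exact ⟨y * (a * a + 1 - ad * a), by rw [mul_assoc, I2, mul_one]⟩
  tfae_have 7 → 3 := by
    rintro ⟨x, hx, e⟩
    have h1x : (1 : A) ∈ {y : A | ∃ z, y = z * x} := by rw [hx]; trivial
    obtain ⟨z0, hz0⟩ := h1x
    have hcancel : ∀ w : A, x * w = 0 → w = 0 := by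
      intro w hw
      have : (z0 * x) * w = 0 := by rw [mul_assoc, hw, mul_zero]
      rwa [← hz0, one_mul] at this
    have key : x * (a * (a * ad) - a) = 0 := by
      rw [mul_sub, show x * (a * (a * ad)) = (x * a) * a * ad by noncomm_ring, ← e, h2, sub_self]
    have h0 : a * (a * ad) = a := sub_eq_zero.mp (hcancel _ key)
    exact ⟨x, a * a, e, by rw [mul_assoc]; exact h0.symm⟩
  tfae_finish

end Aux

/-- For `a` with Moore–Penrose inverse `a†` in a Banach algebra: `a` is EP iff `a† = sa`
with `s⁻¹(0) = 0`, iff `a† = s₁a` and `a = s₂a†`, iff `a† = au` with `uA = A`, iff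
`a† = au₁` and `a = a†u₂`, iff `a† = at` with `t₋₁(0) = 0`, iff `a† = xa` with `Ax = A`. -/
theorem ep_tfae_dagger_eq_sa {A : Type*} [NormedRing A] [NormedAlgebra ℂ A] [CompleteSpace A]
    (a ad : A) (had : IsMPInv a ad) :
    List.TFAE
      [a * ad = ad * a,
       ∃ s : A, {x : A | s * x = 0} = {0} ∧ ad = s * a,
       ∃ s₁ s₂ : A, ad = s₁ * a ∧ a = s₂ * ad,
       ∃ u : A, {y : A | ∃ x, y = u * x} = Set.univ ∧ ad = a * u,
       ∃ u₁ u₂ : A, ad = a * u₁ ∧ a = ad * u₂,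
       ∃ t : A, {x : A | x * t = 0} = {0} ∧ ad = a * t,
       ∃ x : A, {y : A | ∃ z, y = z * x} = Set.univ ∧ ad = x * a] :=
  ep_tfae_dagger_eq_sa' a ad had.1 had.2.1 had.2.2.1 had.2.2.2
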